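/- Let G, H be groupoids and X : Hᵒᵖ × G ⥤ Type an (H,G)-bi-set such that for every object η of H the G-set X(η, -) : G ⥤ Type is free and finite. Then the projection q : GXH ⥤ H from the double translation groupoid is a finite weak cover: for every object η₀ of H, the homotopy fiber of q over η₀ is thin and has finitely many connected components. -/

import Mathlib

open CategoryTheory Opposite

universe w v₁ v₂ u₁ u₂

variable {G : Type u₁} {H : Type u₂} [Groupoid.{v₁} G] [Groupoid.{v₂} H]

namespace BiSet

variable (X : Hᵒᵖ × G ⥤ Type w)

/-- The left action `x ↦ g • x` of a bi-set `X : Hᵒᵖ × G ⥤ Type`. -/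
def lAct {γ γ' : G} (g : γ ⟶ γ') (η : H) : X.obj (op η, γ) → X.obj (op η, γ') :=
  X.map ((𝟙 (op η), g) : (op η, γ) ⟶ (op η, γ'))

/-- The right action `x ↦ x • h` of a bi-set `X : Hᵒᵖ × G ⥤ Type`. -/
def rAct {η' η : H} (h : η' ⟶ η) (γ : G) : X.obj (op η, γ) → X.obj (op η', γ) :=
  X.map ((h.op, 𝟙 γ) : (op η, γ) ⟶ (op η', γ))

variable {X}

theorem lAct_id {γ : G} (η : H) (x : X.obj (op η, γ)) : lAct X (𝟙 γ) η x = x := by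
  unfold lAct
  exact Functor.map_id_apply X (op η, γ) x

theorem rAct_id {η : H} (γ : G) (x : X.obj (op η, γ)) : rAct X (𝟙 η) γ x = x := by
  unfold rAct
  exact Functor.map_id_apply X (op η, γ) x

theorem lAct_comp {γ γ' γ'' : G} (g : γ ⟶ γ') (g' : γ' ⟶ γ'') (η : H)
    (x : X.obj (op η, γ)) : lAct X (g ≫ g') η x = lAct X g' η (lAct X g η x) := by
  unfold lAct
  rw [← Functor.map_comp_apply, prod_comp]
  simp [Prod.mkHom]

theorem rAct_comp {η η' η'' : H} (h : η ⟶ η') (h' : η' ⟶ η'') (γ : G)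
    (x : X.obj (op η'', γ)) : rAct X (h ≫ h') γ x = rAct X h γ (rAct X h' γ x) := by
  unfold rAct
  rw [← Functor.map_comp_apply, prod_comp]
  simp [Prod.mkHom]

theorem lAct_rAct {γ γ' : G} {η' η : H} (g : γ ⟶ γ') (h : η' ⟶ η) (x : X.obj (op η, γ)) :
    lAct X g η' (rAct X h γ x) = rAct X h γ' (lAct X g η x) := by
  unfold lAct rAct
  rw [← Functor.map_comp_apply, ← Functor.map_comp_apply, prod_comp, prod_comp]
  simp [Prod.mkHom]

end BiSet

/-- Objects of the double translation groupoid `GXH` of a bi-set `X : Hᵒᵖ × G ⥤ Type`: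
triples `(γ, x, η)` with `x ∈ X(η, γ)`. -/
structure DoubleTranslation (X : Hᵒᵖ × G ⥤ Type w) where
  γ : G
  η : H
  x : X.obj (op η, γ)

namespace DoubleTranslation

variable {X : Hᵒᵖ × G ⥤ Type w}

/-- The double translation groupoid: morphisms `a ⟶ b` are pairs `(g, h)` with
`g : a.γ ⟶ b.γ`, `h : a.η ⟶ b.η` and `g • a.x = b.x • h`. -/
instance : Category (DoubleTranslation X) where
  Hom a b := {p : (a.γ ⟶ b.γ) × (a.η ⟶ b.η) //
      BiSet.lAct X p.1 a.η a.x = BiSet.rAct X p.2 b.γ b.x}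
  id a := ⟨(𝟙 a.γ, 𝟙 a.η), by rw [BiSet.lAct_id, BiSet.rAct_id]⟩
  comp {a b c} f g := ⟨(f.1.1 ≫ g.1.1, f.1.2 ≫ g.1.2), by
    rw [BiSet.lAct_comp, f.2, BiSet.lAct_rAct, g.2, ← BiSet.rAct_comp]⟩
  id_comp f := by apply Subtype.ext; dsimp; simp
  comp_id f := by apply Subtype.ext; dsimp; simp
  assoc f g h := by apply Subtype.ext; dsimp; simp

/-- The projection `q : GXH ⥤ H` of the double translation groupoid. -/
def toH (X : Hᵒᵖ × G ⥤ Type w) : DoubleTranslation X ⥤ H where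
  obj a := a.η
  map f := f.1.2
  map_id _ := rfl
  map_comp _ _ := rfl

end DoubleTranslation

open BiSet

/-- Freeness for a `Type`-valued functor: all orbit maps `g ↦ g • x` are injective. -/
def GSetFree {C : Type u} [Category.{v} C] (T : C ⥤ Type w) : Prop :=
  ∀ ⦃c c' : C⦄ (x : T.obj c), Function.Injective fun g : c ⟶ c' => T.map g x

/-- The relation on `Σ c, T c` whose quotient is the colimit of `T` in `Type`. -/
def ColimRel {C : Type u} [Category.{v} C] (T : C ⥤ Type w) :
    (Σ c : C, T.obj c) → (Σ c : C, T.obj c) → Prop :=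
  fun x y => ∃ g : x.1 ⟶ y.1, T.map g x.2 = y.2

/-- Finiteness for a `Type`-valued functor: its colimit in `Type` is a finite set. -/
def GSetFinite {C : Type u} [Category.{v} C] (T : C ⥤ Type w) : Prop :=
  Finite (Quot (ColimRel T))

/-- A functor is a *finite weak cover* if each of its homotopy fibers (structured-arrow
categories) is thin and has finitely many connected components. -/
def FiniteWeakCover {K : Type u₃} {C : Type u₄} [Category.{v₃} K] [Category.{v₄} C]
    (m : K ⥤ C) : Prop :=
  ∀ c : C, Quiver.IsThin (StructuredArrow c m) ∧
    Finite (ConnectedComponents (StructuredArrow c m))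

/-- If the `G`-set `X(η, -)` is free and finite for every object `η` of `H`, then the
projection `q : GXH ⥤ H` from the double translation groupoid is a finite weak cover. -/
theorem doubleTranslation_toH_finiteWeakCover (X : Hᵒᵖ × G ⥤ Type w)
    (hfree : ∀ η : H, GSetFree ((Functor.curry.obj X).obj (op η)))
    (hfin : ∀ η : H, GSetFinite ((Functor.curry.obj X).obj (op η))) :
    FiniteWeakCover (DoubleTranslation.toH X) := by
  intro η₀
  set T := (Functor.curry.obj X).obj (op η₀) with hT
  have Tmap : ∀ {γ γ' : G} (g : γ ⟶ γ') (x : X.obj (op η₀, γ)),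
      T.map g x = lAct X g η₀ x := fun _ _ => rfl
  constructor
  · intro A B
    constructor
    intro f₁ f₂
    apply StructuredArrow.hom_ext
    have w1 : A.hom ≫ f₁.right.1.2 = B.hom := StructuredArrow.w f₁
    have w2 : A.hom ≫ f₂.right.1.2 = B.hom := StructuredArrow.w f₂
    have hh : f₁.right.1.2 = f₂.right.1.2 := (cancel_epi A.hom).mp (w1.trans w2.symm)
    have hg : f₁.right.1.1 = f₂.right.1.1 := by
      apply hfree A.right.η A.right.x
      show lAct X f₁.right.1.1 A.right.η A.right.x = lAct X f₂.right.1.1 A.right.η A.right.x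
      rw [f₁.right.2, f₂.right.2, hh]
    exact Subtype.ext (Prod.ext hg hh)
  · have hTfin : Finite (Quot (ColimRel T)) := hfin η₀
    have hequiv : _root_.Equivalence (ColimRel T) := by
      constructor
      · intro x; exact ⟨𝟙 _, by simp⟩
      · rintro x y ⟨g, hg⟩
        refine ⟨Groupoid.inv g, ?_⟩
        rw [← hg, ← FunctorToTypes.map_comp_apply, Groupoid.comp_inv,
          FunctorToTypes.map_id_apply]
      · rintro x y z ⟨g, hg⟩ ⟨g', hg'⟩
        exact ⟨g ≫ g', by rw [FunctorToTypes.map_comp_apply, hg, hg']⟩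
    let φ : StructuredArrow η₀ (DoubleTranslation.toH X) → Quot (ColimRel T) :=
      fun A => Quot.mk _ ⟨A.right.γ, rAct X A.hom A.right.γ A.right.x⟩
    have key : ∀ {A B : StructuredArrow η₀ (DoubleTranslation.toH X)},
        (A ⟶ B) → φ A = φ B := by
      intro A B f
      apply Quot.sound
      refine ⟨f.right.1.1, ?_⟩
      have w : A.hom ≫ f.right.1.2 = B.hom := StructuredArrow.w f
      show lAct X f.right.1.1 η₀ (rAct X A.hom A.right.γ A.right.x)
          = rAct X B.hom B.right.γ B.right.x
      calc lAct X f.right.1.1 η₀ (rAct X A.hom A.right.γ A.right.x)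
          = rAct X A.hom B.right.γ (lAct X f.right.1.1 A.right.η A.right.x) :=
            lAct_rAct _ _ _
        _ = rAct X A.hom B.right.γ (rAct X f.right.1.2 B.right.γ B.right.x) := by
            rw [f.right.2]
        _ = rAct X (A.hom ≫ f.right.1.2) B.right.γ B.right.x := (rAct_comp _ _ _ _).symm
        _ = rAct X B.hom B.right.γ B.right.x := by rw [w]; rfl
    have φconst : ∀ {A B : StructuredArrow η₀ (DoubleTranslation.toH X)},
        Zigzag A B → φ A = φ B := by
      intro A B h
      induction h with
      | refl => rfl
      | tail _ hz ih =>
        rcases hz with ⟨⟨f⟩⟩ | ⟨⟨f⟩⟩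
        · exact ih.trans (key f)
        · exact ih.trans (key f).symm
    let ψ : ConnectedComponents (StructuredArrow η₀ (DoubleTranslation.toH X)) →
        Quot (ColimRel T) := Quotient.lift φ (fun A B h => φconst h)
    have hψ : Function.Injective ψ := by
      intro a b
      induction a using Quotient.inductionOn with
      | h A =>
      induction b using Quotient.inductionOn with
      | h B =>
      intro hab
      have : ColimRel T ⟨A.right.γ, rAct X A.hom A.right.γ A.right.x⟩
          ⟨B.right.γ, rAct X B.hom B.right.γ B.right.x⟩ :=
        (hequiv.eqvGen_iff).mp (Quot.eq.mp hab)
      obtain ⟨g, hg⟩ := this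
      apply Quotient.sound
      refine Relation.ReflTransGen.single (Or.inl ⟨?_⟩)
      refine StructuredArrow.homMk ⟨(g, Groupoid.inv A.hom ≫ B.hom), ?_⟩ ?_
      · show lAct X g A.right.η A.right.x
            = rAct X (Groupoid.inv A.hom ≫ B.hom) B.right.γ B.right.x
        rw [Tmap] at hg
        have hg' : lAct X g η₀ (rAct X A.hom A.right.γ A.right.x)
            = rAct X B.hom B.right.γ B.right.x := hg
        refine Eq.trans ?_ (rAct_comp _ _ _ _).symm
        calc lAct X g ((DoubleTranslation.toH X).obj A.right) A.right.x
            = rAct X (𝟙 ((DoubleTranslation.toH X).obj A.right)) B.right.γ (lAct X g A.right.η A.right.x) :=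
              (rAct_id _ _).symm
          _ = rAct X (Groupoid.inv A.hom ≫ A.hom) B.right.γ
                (lAct X g A.right.η A.right.x) := by rw [Groupoid.inv_comp]
          _ = rAct X (Groupoid.inv A.hom) B.right.γ
                (rAct X A.hom B.right.γ (lAct X g A.right.η A.right.x)) :=
              rAct_comp _ _ _ _
          _ = rAct X (Groupoid.inv A.hom) B.right.γ
                (lAct X g η₀ (rAct X A.hom A.right.γ A.right.x)) :=
                congrArg (rAct X (Groupoid.inv A.hom) B.right.γ) (lAct_rAct _ _ _).symm
          _ = rAct X (Groupoid.inv A.hom) B.right.γ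
                (rAct X B.hom B.right.γ B.right.x) := by rw [hg']
      · show A.hom ≫ (Groupoid.inv A.hom ≫ B.hom) = B.hom
        simp
    exact Finite.of_injective ψ hψ
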